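/- Exact Block-Encoding of a Diagonal Matrix from a Digital Oracle (Lemma B.16): Let N = 2^n and D = 2^d. Let a_0,…,a_{N−1} ∈ [−1,1] be reals, and let b_0,…,b_{N−1} ∈ {0,…,D−1} be integers with cos(π b_j / D) = a_j for every j. Let U be a unitary on ℂ^{2^d} ⊗ ℂ^{2^n} satisfying U(|0⟩_d ⊗ |j⟩_n) = |b_j⟩_d ⊗ |j⟩_n for all j. Define the controlled rotation CR_Y(t) := Σ_{a=0}^{D−1} e^{−i a t Y} ⊗ |a⟩⟨a| on ℂ² ⊗ ℂ^{2^d}, where Y is the 2×2 Pauli-Y matrix, and define V := (I₂ ⊗ U†)(CR_Y(π/D) ⊗ I_N)(I₂ ⊗ U). Then (⟨0|_{d+1} ⊗ I_N) V (|0⟩_{d+1} ⊗ I_N) = diag(a_0,…,a_{N−1}); i.e. V is a (1, d+1, 0)-block-encoding of A = diag(a_0,…,a_{N−1}). -/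

import Mathlib

open scoped Kronecker Matrix

noncomputable section

/-- The rotation `e^{-iθY} = cos θ · I - i sin θ · Y`. -/
def RYmat (θ : ℝ) : Matrix (Fin 2) (Fin 2) ℂ :=
  !![(Real.cos θ : ℂ), -(Real.sin θ : ℂ); (Real.sin θ : ℂ), (Real.cos θ : ℂ)]

/-- The controlled rotation `CR_Y(t) = Σ_a e^{-iatY} ⊗ |a⟩⟨a|` on `ℂ² ⊗ ℂ^{2^d}`. -/
def CRY (d : ℕ) (t : ℝ) : Matrix (Fin 2 × Fin (2^d)) (Fin 2 × Fin (2^d)) ℂ :=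
  ∑ a : Fin (2^d), RYmat ((a : ℕ) * t) ⊗ₖ Matrix.single a a (1 : ℂ)

lemma kron_conjT {m n : Type*} [Fintype m] [Fintype n] [DecidableEq m] [DecidableEq n]
    (A : Matrix m m ℂ) (B : Matrix n n ℂ) : (A ⊗ₖ B)ᴴ = Aᴴ ⊗ₖ Bᴴ := by
  ext ⟨x, q⟩ ⟨y, r⟩
  simp [Matrix.conjTranspose_apply, Matrix.kroneckerMap_apply, mul_comm]

lemma kron_unitary {m n : Type*} [Fintype m] [Fintype n] [DecidableEq m] [DecidableEq n]
    {A : Matrix m m ℂ} {B : Matrix n n ℂ}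
    (hA : A ∈ Matrix.unitaryGroup m ℂ) (hB : B ∈ Matrix.unitaryGroup n ℂ) :
    A ⊗ₖ B ∈ Matrix.unitaryGroup (m × n) ℂ := by
  rw [Matrix.mem_unitaryGroup_iff] at *
  rw [Matrix.star_eq_conjTranspose] at hA hB
  show (A ⊗ₖ B) * (A ⊗ₖ B)ᴴ = 1
  rw [kron_conjT, ← Matrix.mul_kronecker_mul]
  show (A * Aᴴ) ⊗ₖ (B * Bᴴ) = 1
  rw [hA, hB, Matrix.one_kronecker_one]

lemma RYmat_unitary (θ : ℝ) : RYmat θ ∈ Matrix.unitaryGroup (Fin 2) ℂ := by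
  rw [Matrix.mem_unitaryGroup_iff]
  show RYmat θ * (RYmat θ)ᴴ = 1
  ext i j
  fin_cases i <;> fin_cases j <;>
    simp [RYmat, Matrix.mul_apply, Fin.sum_univ_two, Matrix.one_apply,
      ← Complex.cos_conj, ← Complex.sin_conj, Complex.conj_ofReal]
  all_goals first
    | linear_combination Complex.sin_sq_add_cos_sq (θ : ℂ)
    | ring

lemma CRY_unitary (d : ℕ) (t : ℝ) : CRY d t ∈ Matrix.unitaryGroup (Fin 2 × Fin (2^d)) ℂ := by
  rw [Matrix.mem_unitaryGroup_iff]
  show CRY d t * (CRY d t)ᴴ = 1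
  unfold CRY
  rw [Matrix.conjTranspose_sum, Finset.sum_mul_sum]
  have key : ∀ a b : Fin (2^d),
      (RYmat ((a : ℕ) * t) ⊗ₖ Matrix.single a a (1 : ℂ))
        * (RYmat ((b : ℕ) * t) ⊗ₖ Matrix.single b b (1 : ℂ))ᴴ
      = if a = b then (1 : Matrix (Fin 2) (Fin 2) ℂ) ⊗ₖ Matrix.single a a (1 : ℂ) else 0 := by
    intro a b
    rw [kron_conjT, ← Matrix.mul_kronecker_mul]
    have hstd : (Matrix.single b b (1 : ℂ))ᴴ = Matrix.single b b 1 := by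
      ext i j
      simp [Matrix.conjTranspose_apply, Matrix.single, and_comm]
    rw [hstd]
    show (RYmat ((a:ℕ)*t) * (RYmat ((b:ℕ)*t))ᴴ) ⊗ₖ
      (Matrix.single a a (1:ℂ) * Matrix.single b b 1) = _
    by_cases hab : a = b
    · subst hab
      rw [Matrix.single_mul_single_same]
      have h1 : RYmat ((a:ℕ)*t) * (RYmat ((a:ℕ)*t))ᴴ = 1 := by
        have := (Matrix.mem_unitaryGroup_iff).mp (RYmat_unitary ((a:ℕ)*t))
        rwa [Matrix.star_eq_conjTranspose] at this
      rw [h1, if_pos rfl]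
      rw [one_mul]
    · rw [Matrix.single_mul_single_of_ne (h := hab), if_neg hab, Matrix.kronecker_zero]
  rw [Finset.sum_congr rfl (fun a _ => Finset.sum_congr rfl (fun b _ => key a b))]
  simp only [Finset.sum_ite_eq, Finset.mem_univ, if_pos]
  have hsum : ∑ a : Fin (2^d), ((1 : Matrix (Fin 2) (Fin 2) ℂ) ⊗ₖ Matrix.single a a (1:ℂ))
      = (1 : Matrix (Fin 2) (Fin 2) ℂ) ⊗ₖ (∑ a : Fin (2^d), Matrix.single a a (1:ℂ)) := by
    ext ⟨x, q⟩ ⟨y, r⟩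
    simp [Matrix.sum_apply, Matrix.kroneckerMap_apply, Finset.mul_sum]
  rw [hsum]
  have hid : (∑ a : Fin (2^d), Matrix.single a a (1:ℂ))
      = (1 : Matrix (Fin (2^d)) (Fin (2^d)) ℂ) := by
    ext i j
    by_cases h : i = j
    · subst h
      simp [Matrix.sum_apply, Matrix.single, Matrix.one_apply]
    · simp only [Matrix.sum_apply, Matrix.single, Matrix.one_apply, Matrix.of_apply]
      rw [if_neg h, Finset.sum_eq_zero]
      intro x _
      rw [if_neg]
      rintro ⟨rfl, rfl⟩
      exact h rfl
  rw [hid, Matrix.one_kronecker_one]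


lemma reindex_unitary {m l : Type*} [Fintype m] [Fintype l] [DecidableEq m] [DecidableEq l]
    (e : m ≃ l) {M : Matrix m m ℂ} (hM : M ∈ Matrix.unitaryGroup m ℂ) :
    Matrix.reindex e e M ∈ Matrix.unitaryGroup l ℂ := by
  rw [Matrix.mem_unitaryGroup_iff] at *
  rw [Matrix.star_eq_conjTranspose] at *
  rw [Matrix.conjTranspose_reindex]
  show (M.submatrix e.symm e.symm) * (Mᴴ.submatrix e.symm e.symm) = 1
  rw [Matrix.submatrix_mul_equiv, hM, Matrix.submatrix_one_equiv]

/-- **Exact block-encoding of a diagonal matrix from a digital oracle** (Lemma B.16).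
Given reals `a_j ∈ [-1,1]`, digital values `b_j` with `cos(π b_j / 2^d) = a_j`, and a
unitary `U` with `U(|0⟩_d ⊗ |j⟩_n) = |b_j⟩_d ⊗ |j⟩_n`, the circuit
`V = (I₂ ⊗ U†)(CR_Y(π/2^d) ⊗ I_N)(I₂ ⊗ U)` satisfies
`(⟨0|_{d+1} ⊗ I_N) V (|0⟩_{d+1} ⊗ I_N) = diag(a_0, …, a_{N-1})`;
i.e. `V` is a `(1, d+1, 0)`-block-encoding of `diag(a_0, …, a_{N-1})`. -/
theorem diagonal_block_encoding_from_digital_oracle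
    (n d : ℕ) (av : Fin (2^n) → ℝ) (hav : ∀ j, |av j| ≤ 1)
    (bv : Fin (2^n) → Fin (2^d))
    (hcos : ∀ j, Real.cos (Real.pi * (bv j : ℕ) / 2^d) = av j)
    (U : Matrix (Fin (2^d) × Fin (2^n)) (Fin (2^d) × Fin (2^n)) ℂ)
    (hUu : U ∈ Matrix.unitaryGroup (Fin (2^d) × Fin (2^n)) ℂ)
    (hU : ∀ (j : Fin (2^n)) (p : Fin (2^d) × Fin (2^n)),
        U p ((0 : Fin (2^d)), j) = if p = (bv j, j) then 1 else 0)
    (V : Matrix (Fin 2 × (Fin (2^d) × Fin (2^n))) (Fin 2 × (Fin (2^d) × Fin (2^n))) ℂ)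
    (hV : V = ((1 : Matrix (Fin 2) (Fin 2) ℂ) ⊗ₖ Uᴴ)
        * (Matrix.reindex (Equiv.prodAssoc (Fin 2) (Fin (2^d)) (Fin (2^n)))
            (Equiv.prodAssoc (Fin 2) (Fin (2^d)) (Fin (2^n)))
            (CRY d (Real.pi / 2^d) ⊗ₖ (1 : Matrix (Fin (2^n)) (Fin (2^n)) ℂ)))
        * ((1 : Matrix (Fin 2) (Fin 2) ℂ) ⊗ₖ U)) :
    V ∈ Matrix.unitaryGroup (Fin 2 × (Fin (2^d) × Fin (2^n))) ℂ ∧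
    (Matrix.of fun i j : Fin (2^n) =>
        V ((0 : Fin 2), ((0 : Fin (2^d)), i)) ((0 : Fin 2), ((0 : Fin (2^d)), j)))
      = Matrix.diagonal (fun j => (av j : ℂ)) := by
  subst hV
  set e := Equiv.prodAssoc (Fin 2) (Fin (2^d)) (Fin (2^n)) with he
  set B := Matrix.reindex e e (CRY d (Real.pi / 2^d) ⊗ₖ (1 : Matrix (Fin (2^n)) (Fin (2^n)) ℂ))
    with hB
  have hUstar : Uᴴ ∈ Matrix.unitaryGroup (Fin (2^d) × Fin (2^n)) ℂ := by
    have := Unitary.star_mem hUu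
    rwa [Matrix.star_eq_conjTranspose] at this
  constructor
  · exact mul_mem (mul_mem (kron_unitary (one_mem _) hUstar)
      (reindex_unitary e (kron_unitary (CRY_unitary d _) (one_mem _))))
      (kron_unitary (one_mem _) hUu)
  have hArow : ∀ (i : Fin (2^n)) (p : Fin 2 × (Fin (2^d) × Fin (2^n))),
      ((1 : Matrix (Fin 2) (Fin 2) ℂ) ⊗ₖ Uᴴ) ((0:Fin 2),((0:Fin (2^d)),i)) p
        = if p = ((0:Fin 2),(bv i, i)) then 1 else 0 := by
    rintro i ⟨p1, p2⟩
    show (1 : Matrix (Fin 2) (Fin 2) ℂ) 0 p1 * Uᴴ ((0:Fin (2^d)),i) p2 = _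
    rw [Matrix.conjTranspose_apply, hU i p2, Matrix.one_apply]
    by_cases h1 : p1 = 0 <;> by_cases h2 : p2 = (bv i, i) <;>
      simp [h1, h2, Prod.ext_iff, eq_comm]
  have hCcol : ∀ (j : Fin (2^n)) (q : Fin 2 × (Fin (2^d) × Fin (2^n))),
      ((1 : Matrix (Fin 2) (Fin 2) ℂ) ⊗ₖ U) q ((0:Fin 2),((0:Fin (2^d)),j))
        = if q = ((0:Fin 2),(bv j, j)) then 1 else 0 := by
    rintro j ⟨q1, q2⟩
    show (1 : Matrix (Fin 2) (Fin 2) ℂ) q1 0 * U q2 ((0:Fin (2^d)),j) = _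
    rw [hU j q2, Matrix.one_apply]
    by_cases h1 : q1 = 0 <;> by_cases h2 : q2 = (bv j, j) <;>
      simp [h1, h2, Prod.ext_iff]
  have hentry : ∀ i j : Fin (2^n),
      (((1 : Matrix (Fin 2) (Fin 2) ℂ) ⊗ₖ Uᴴ) * B * ((1 : Matrix (Fin 2) (Fin 2) ℂ) ⊗ₖ U))
        ((0:Fin 2),((0:Fin (2^d)),i)) ((0:Fin 2),((0:Fin (2^d)),j))
      = B ((0:Fin 2),(bv i, i)) ((0:Fin 2),(bv j, j)) := by
    intro i j
    rw [Matrix.mul_apply]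
    rw [Finset.sum_congr rfl (fun q _ => by
      rw [Matrix.mul_apply, hCcol j q,
        Finset.sum_congr rfl (fun p _ => by rw [hArow i p, ite_mul, one_mul, zero_mul]),
        Finset.sum_ite_eq' Finset.univ ((0:Fin 2),(bv i, i)) (fun p => B p q),
        if_pos (Finset.mem_univ _), mul_ite, mul_one, mul_zero])]
    rw [Finset.sum_ite_eq' Finset.univ ((0:Fin 2),(bv j, j)), if_pos (Finset.mem_univ _)]
  ext i j
  rw [Matrix.of_apply, hentry i j, hB, Matrix.reindex_apply, Matrix.submatrix_apply]
  have hes : ∀ (x : Fin 2) (y : Fin (2^d)) (z : Fin (2^n)), e.symm (x, (y, z)) = ((x, y), z) :=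
    fun _ _ _ => rfl
  rw [hes, hes]
  show CRY d (Real.pi / 2^d) ((0:Fin 2), bv i) ((0:Fin 2), bv j)
      * (1 : Matrix (Fin (2^n)) (Fin (2^n)) ℂ) i j = _
  have hCRY : CRY d (Real.pi / 2^d) ((0:Fin 2), bv i) ((0:Fin 2), bv j)
      = if bv i = bv j then ((Real.cos ((bv j : ℕ) * (Real.pi / 2^d)) : ℝ) : ℂ) else 0 := by
    unfold CRY
    rw [Matrix.sum_apply]
    rw [Finset.sum_congr rfl (fun a _ => by
      show RYmat ((a : ℕ) * (Real.pi / 2^d)) 0 0 * Matrix.single a a (1:ℂ) (bv i) (bv j)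
        = if a = bv j then (if bv i = bv j then RYmat ((a : ℕ) * (Real.pi / 2^d)) 0 0 else 0)
          else 0
      by_cases h1 : a = bv j
      · by_cases h2 : a = bv i
        · have h3 : bv i = bv j := h2 ▸ h1
          simp [h1, h2, h3, Matrix.single]
        · have h3 : bv i ≠ bv j := fun h => h2 (h1.trans h.symm)
          simp [h1, h2, h3, Ne.symm h3, Matrix.single]
      · have h3 : ¬(a = bv i ∧ a = bv j) := fun h => h1 h.2
        simp [h1, h3, Matrix.single])]
    rw [Finset.sum_ite_eq' Finset.univ (bv j), if_pos (Finset.mem_univ _)]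
    by_cases h : bv i = bv j
    · rw [if_pos h, if_pos h]
      simp [RYmat]
    · rw [if_neg h, if_neg h]
  rw [hCRY]
  by_cases hij : i = j
  · subst hij
    have hb : (bv i : Fin (2^d)) = bv i := rfl
    rw [if_pos rfl, Matrix.one_apply_eq, mul_one, Matrix.diagonal_apply_eq]
    rw [show (bv i : ℕ) * (Real.pi / 2^d) = Real.pi * (bv i : ℕ) / 2^d by ring, hcos]
  · rw [Matrix.one_apply_ne hij, mul_zero, Matrix.diagonal_apply_ne _ hij]
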